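/- arXiv:1605.06846 — 2 statements merged into one kernel-verified Lean document; each statement's English description precedes it below -/
import Mathlib

section
/- Let P and P' be (possibly unbounded) self-adjoint operators on a Hilbert space H. If there exists a constant C > 0 such that ‖e^{iPt} − e^{iP't}‖ ≤ C|t| for all t ∈ ℝ, then D(P) = D(P') and P − P' extends to a bounded operator of norm at most C. -/
open Complex

open Filter Topology NNReal

section AuxPerturbation

local notation "⟪" x ", " y "⟫" => @inner ℂ _ _ x y

variable {H : Type*} [NormedAddCommGroup H] [InnerProductSpace ℂ H] [CompleteSpace H]

lemma star_grp (U : ℝ → (H →L[ℂ] H)) (hU0 : U 0 = 1)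
    (hUgrp : ∀ s t : ℝ, U (s + t) = U s * U t)
    (hUunit : ∀ t, U t ∈ unitary (H →L[ℂ] H)) (t : ℝ) :
    star (U t) = U (-t) := by
  have h1 : U t * U (-t) = 1 := by rw [← hUgrp]; simp [hU0]
  have h2 : star (U t) * U t = 1 := ((Unitary.mem_iff).1 (hUunit t)).1
  calc star (U t) = star (U t) * (U t * U (-t)) := by rw [h1, mul_one]
    _ = (star (U t) * U t) * U (-t) := by rw [mul_assoc]
    _ = U (-t) := by rw [h2, one_mul]

lemma quot_norm_tendsto (U : ℝ → (H →L[ℂ] H)) (hU0 : U 0 = 1) (x : H) (d : H)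
    (hU : HasDerivAt (fun t : ℝ => U t x) d 0) :
    Tendsto (fun t : ℝ => ‖t⁻¹ • (U (-t) x - x)‖) (𝓝[≠] (0:ℝ)) (𝓝 ‖d‖) := by
  have hneg : HasDerivAt (fun t : ℝ => U (-t) x) ((-1 : ℝ) • d) 0 := by
    have hg : HasDerivAt (fun t : ℝ => -t) (-1 : ℝ) 0 := (hasDerivAt_neg (0:ℝ))
    have hU' : HasDerivAt (fun t : ℝ => U t x) d (-0) := by simpa using hU
    have := hU'.scomp (0:ℝ) (h := fun t : ℝ => -t) (h' := -1) (by simpa using hg)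
    simpa [Function.comp_def] using this
  have h1 := (hasDerivAt_iff_tendsto_slope).1 hneg
  have h2 : Tendsto (fun t : ℝ => t⁻¹ • (U (-t) x - x)) (𝓝[≠] (0:ℝ)) (𝓝 ((-1:ℝ) • d)) := by
    simpa [slope_fun_def, hU0] using h1
  simpa using h2.norm

lemma dom_incl (P P' : H →ₗ.[ℂ] H) (hP' : IsSelfAdjoint P')
    (U U' : ℝ → (H →L[ℂ] H)) (hU0 : U 0 = 1) (hU'0 : U' 0 = 1)
    (hU'grp : ∀ s t : ℝ, U' (s + t) = U' s * U' t)
    (hU'unit : ∀ t, U' t ∈ unitary (H →L[ℂ] H))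
    (hgen : ∀ x : P.domain, HasDerivAt (fun t : ℝ => U t (x : H)) (Complex.I • P x) 0)
    (hgen' : ∀ x : P'.domain, HasDerivAt (fun t : ℝ => U' t (x : H)) (Complex.I • P' x) 0)
    (C : ℝ) (hC0 : 0 ≤ C) (hC : ∀ t : ℝ, ‖U t - U' t‖ ≤ C * |t|) :
    P.domain ≤ P'.domain := by
  intro x hx
  have hadj : P'.adjoint = P' := hP'
  rw [← hadj]
  rw [LinearPMap.mem_adjoint_domain_iff]
  set K : ℝ := ‖P ⟨x, hx⟩‖ + C * ‖x‖ with hK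
  have key : ∀ z : P'.domain, ‖⟪x, P' z⟫‖ ≤ K * ‖z‖ := by
    intro z
    -- limit of the inner products of difference quotients
    have hd' : Tendsto (fun t : ℝ => t⁻¹ • (U' t (z : H) - (z : H))) (𝓝[≠] (0:ℝ))
        (𝓝 (Complex.I • P' z)) := by
      simpa [slope_fun_def, hU'0] using (hasDerivAt_iff_tendsto_slope).1 (hgen' z)
    have hn : Tendsto (fun t : ℝ => ‖⟪x, t⁻¹ • (U' t (z : H) - (z : H))⟫‖) (𝓝[≠] (0:ℝ))
        (𝓝 ‖⟪x, Complex.I • P' z⟫‖) :=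
      (((innerSL ℂ x).continuous.tendsto _).comp hd').norm
    -- bound function
    have hq := quot_norm_tendsto U hU0 x _ (hgen ⟨x, hx⟩)
    have hb : Tendsto (fun t : ℝ => ‖t⁻¹ • (U (-t) x - x)‖ * ‖(z : H)‖ + C * ‖x‖ * ‖(z : H)‖)
        (𝓝[≠] (0:ℝ)) (𝓝 (‖Complex.I • P ⟨x, hx⟩‖ * ‖(z : H)‖ + C * ‖x‖ * ‖(z : H)‖)) :=
      Tendsto.add (hq.mul_const _) tendsto_const_nhds
    -- eventual inequality
    have hle : ∀ t : ℝ, t ≠ 0 →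
        ‖⟪x, t⁻¹ • (U' t (z : H) - (z : H))⟫‖
          ≤ ‖t⁻¹ • (U (-t) x - x)‖ * ‖(z : H)‖ + C * ‖x‖ * ‖(z : H)‖ := by
      intro t ht0
      have hstar : (U' t).adjoint = U' (-t) := by
        rw [← ContinuousLinearMap.star_eq_adjoint]
        exact star_grp U' hU'0 hU'grp hU'unit t
      have hip : ⟪x, U' t (z : H) - (z : H)⟫ = ⟪U' (-t) x - x, (z : H)⟫ := by
        rw [inner_sub_right, inner_sub_left, ← hstar, ContinuousLinearMap.adjoint_inner_left]
      have hsm : ⟪x, t⁻¹ • (U' t (z : H) - (z : H))⟫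
          = (t⁻¹ : ℂ) * ⟪x, U' t (z : H) - (z : H)⟫ := by
        rw [← Complex.coe_smul, inner_smul_right]
        norm_cast
      rw [hsm, hip, norm_mul]
      have h1 : ‖U' (-t) x - x‖ ≤ ‖U (-t) x - x‖ + C * |t| * ‖x‖ := by
        have : U' (-t) x - x = (U (-t) x - x) - ((U (-t) - U' (-t)) x) := by
          simp [ContinuousLinearMap.sub_apply]
        rw [this]
        refine (norm_sub_le _ _).trans (add_le_add le_rfl ?_)
        calc ‖(U (-t) - U' (-t)) x‖ ≤ ‖U (-t) - U' (-t)‖ * ‖x‖ :=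
              ContinuousLinearMap.le_opNorm _ _
          _ ≤ C * |(-t)| * ‖x‖ := mul_le_mul_of_nonneg_right (hC (-t)) (norm_nonneg x)
          _ = C * |t| * ‖x‖ := by rw [abs_neg]
      calc ‖(t⁻¹ : ℂ)‖ * ‖⟪U' (-t) x - x, (z : H)⟫‖
          ≤ ‖(t⁻¹ : ℂ)‖ * (‖U' (-t) x - x‖ * ‖(z : H)‖) := by
            gcongr; exact norm_inner_le_norm _ _
        _ ≤ |t|⁻¹ * ((‖U (-t) x - x‖ + C * |t| * ‖x‖) * ‖(z : H)‖) := by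
            rw [norm_inv, Complex.norm_real, Real.norm_eq_abs]
            exact mul_le_mul_of_nonneg_left
              (mul_le_mul_of_nonneg_right h1 (norm_nonneg _))
              (inv_nonneg.2 (abs_nonneg t))
        _ = (|t|⁻¹ * ‖U (-t) x - x‖) * ‖(z : H)‖ + (|t|⁻¹ * (C * |t|)) * ‖x‖ * ‖(z : H)‖ := by
            ring
        _ = ‖t⁻¹ • (U (-t) x - x)‖ * ‖(z : H)‖ + C * ‖x‖ * ‖(z : H)‖ := by
            have hinv : |t|⁻¹ * (C * |t|) = C := by
              rw [mul_comm C |t|, inv_mul_cancel_left₀ (abs_ne_zero.2 ht0)]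
            rw [hinv, norm_smul, Real.norm_eq_abs, abs_inv]
    have hfin : ‖⟪x, Complex.I • P' z⟫‖
        ≤ ‖Complex.I • P ⟨x, hx⟩‖ * ‖(z : H)‖ + C * ‖x‖ * ‖(z : H)‖ :=
      le_of_tendsto_of_tendsto' hn hb (fun t => by
        by_cases ht : t = 0
        · subst ht
          have h0 : ‖⟪x, (0:ℝ)⁻¹ • (U' 0 (z : H) - (z : H))⟫‖ = 0 := by simp
          rw [h0]
          exact add_nonneg (mul_nonneg (norm_nonneg _) (norm_nonneg _))
            (mul_nonneg (mul_nonneg hC0 (norm_nonneg _)) (norm_nonneg _))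
        · exact hle t ht)
    have e1 : ‖⟪x, Complex.I • P' z⟫‖ = ‖⟪x, P' z⟫‖ := by
      rw [inner_smul_right]; simp
    have e2 : ‖Complex.I • P ⟨x, hx⟩‖ = ‖P ⟨x, hx⟩‖ := by
      rw [norm_smul]; simp
    rw [e1, e2] at hfin
    rw [hK, add_mul]
    exact hfin
  exact AddMonoidHomClass.continuous_of_bound ((innerSL ℂ x).toLinearMap.comp P'.toFun) K key

theorem aux_perturbation'
    (P P' : H →ₗ.[ℂ] H) (hP : IsSelfAdjoint P) (hP' : IsSelfAdjoint P')
    (U U' : ℝ → (H →L[ℂ] H))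
    (hU0 : U 0 = 1) (hU'0 : U' 0 = 1)
    (hUgrp : ∀ s t : ℝ, U (s + t) = U s * U t)
    (hU'grp : ∀ s t : ℝ, U' (s + t) = U' s * U' t)
    (hUunit : ∀ t, U t ∈ unitary (H →L[ℂ] H))
    (hU'unit : ∀ t, U' t ∈ unitary (H →L[ℂ] H))
    (hgen : ∀ x : P.domain, HasDerivAt (fun t : ℝ => U t (x : H)) (Complex.I • P x) 0)
    (hgen_max : ∀ (ξ : H) (d : H), HasDerivAt (fun t : ℝ => U t ξ) d 0 → ξ ∈ P.domain)
    (hgen' : ∀ x : P'.domain, HasDerivAt (fun t : ℝ => U' t (x : H)) (Complex.I • P' x) 0)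
    (hgen'_max : ∀ (ξ : H) (d : H), HasDerivAt (fun t : ℝ => U' t ξ) d 0 → ξ ∈ P'.domain)
    (C : ℝ) (hCpos : 0 < C)
    (hC : ∀ t : ℝ, ‖U t - U' t‖ ≤ C * |t|) :
    P.domain = P'.domain ∧
      ∃ T : H →L[ℂ] H, ‖T‖ ≤ C ∧
        ∀ (x : H) (hx : x ∈ P.domain) (hx' : x ∈ P'.domain),
          T x = P ⟨x, hx⟩ - P' ⟨x, hx'⟩ := by
  have hC0 : 0 ≤ C := hCpos.le
  have hdom : P.domain = P'.domain :=
    le_antisymm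
      (dom_incl P P' hP' U U' hU0 hU'0 hU'grp hU'unit hgen hgen' C hC0 hC)
      (dom_incl P' P hP U' U hU'0 hU0 hUgrp hUunit hgen' hgen C hC0
        (fun t => by rw [norm_sub_rev]; exact hC t))
  refine ⟨hdom, ?_⟩
  -- the pointwise bound
  have hbound : ∀ (x : H) (hx : x ∈ P.domain) (hx' : x ∈ P'.domain),
      ‖P ⟨x, hx⟩ - P' ⟨x, hx'⟩‖ ≤ C * ‖x‖ := by
    intro x hx hx'
    have h3 : HasDerivAt (fun t : ℝ => U t x - U' t x)
        (Complex.I • P ⟨x, hx⟩ - Complex.I • P' ⟨x, hx'⟩) 0 :=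
      (hgen ⟨x, hx⟩).sub (hgen' ⟨x, hx'⟩)
    have h4 : Filter.Tendsto (fun t : ℝ => t⁻¹ • (U t x - U' t x - (U 0 x - U' 0 x)))
        (𝓝[≠] (0:ℝ)) (𝓝 (Complex.I • P ⟨x, hx⟩ - Complex.I • P' ⟨x, hx'⟩)) := by
      simpa [slope_fun_def] using (hasDerivAt_iff_tendsto_slope).1 h3
    have h4' : Filter.Tendsto (fun t : ℝ => ‖t⁻¹ • (U t x - U' t x - (U 0 x - U' 0 x))‖)
        (𝓝[≠] (0:ℝ)) (𝓝 ‖Complex.I • P ⟨x, hx⟩ - Complex.I • P' ⟨x, hx'⟩‖) := h4.norm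
    have h5 : ‖Complex.I • P ⟨x, hx⟩ - Complex.I • P' ⟨x, hx'⟩‖ ≤ C * ‖x‖ := by
      refine le_of_tendsto h4' ?_
      refine Filter.eventually_of_mem self_mem_nhdsWithin (fun t ht => ?_)
      have ht0 : t ≠ 0 := ht
      have e0 : U 0 x - U' 0 x = 0 := by simp [hU0, hU'0]
      have e1 : U t x - U' t x = (U t - U' t) x := by
        simp [ContinuousLinearMap.sub_apply]
      rw [e0, sub_zero, e1, norm_smul, Real.norm_eq_abs, abs_inv]
      calc |t|⁻¹ * ‖(U t - U' t) x‖ ≤ |t|⁻¹ * (C * |t| * ‖x‖) := by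
            refine mul_le_mul_of_nonneg_left ?_ (inv_nonneg.2 (abs_nonneg t))
            calc ‖(U t - U' t) x‖ ≤ ‖U t - U' t‖ * ‖x‖ := ContinuousLinearMap.le_opNorm _ _
              _ ≤ C * |t| * ‖x‖ := mul_le_mul_of_nonneg_right (hC t) (norm_nonneg x)
        _ = C * ‖x‖ := by
            rw [mul_comm C |t|, mul_assoc, inv_mul_cancel_left₀ (abs_ne_zero.2 ht0)]
    calc ‖P ⟨x, hx⟩ - P' ⟨x, hx'⟩‖
        = ‖Complex.I • P ⟨x, hx⟩ - Complex.I • P' ⟨x, hx'⟩‖ := by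
          rw [← smul_sub, norm_smul]; simp
      _ ≤ C * ‖x‖ := h5
  -- the bounded operator
  set g : P.domain →ₗ[ℂ] H :=
    P.toFun - P'.toFun.comp (Submodule.inclusion hdom.le) with hg
  have hgb : ∀ y : P.domain, ‖g y‖ ≤ C * ‖y‖ := by
    intro y
    have hy' : (y : H) ∈ P'.domain := hdom ▸ y.2
    have e2 : Submodule.inclusion hdom.le y = ⟨(y : H), hy'⟩ := rfl
    have e3 : g y = P ⟨(y : H), y.2⟩ - P' ⟨(y : H), hy'⟩ := by
      simp [hg, LinearMap.sub_apply, LinearMap.comp_apply, e2]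
    rw [e3]
    exact hbound _ y.2 hy'
  set f : P.domain →L[ℂ] H := g.mkContinuous C hgb with hf
  have hdense : DenseRange ⇑(P.domain.subtypeL) :=
    hP.dense_domain.denseRange_val
  have h_e : ∀ y : P.domain, ‖y‖ ≤ (1 : NNReal) * ‖P.domain.subtypeL y‖ := by
    intro y; simp
  refine ⟨f.extend P.domain.subtypeL, ?_, ?_⟩
  · have := f.opNorm_extend_le (e := P.domain.subtypeL) (h_dense := hdense) (h_e := h_e)
    refine this.trans ?_
    have : ‖f‖ ≤ C := LinearMap.mkContinuous_norm_le g hC0 hgb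
    simpa using this
  · intro x hx hx'
    have := ContinuousLinearMap.extend_eq (f := f) (e := P.domain.subtypeL) hdense
      (ContinuousLinearMap.isUniformEmbedding_of_bound _ h_e).isUniformInducing ⟨x, hx⟩
    rw [show (P.domain.subtypeL (⟨x, hx⟩ : P.domain)) = x from rfl] at this
    rw [this]
    have e2 : Submodule.inclusion hdom.le (⟨x, hx⟩ : P.domain) = ⟨x, hx'⟩ := rfl
    show g ⟨x, hx⟩ = _
    simp [hg, LinearMap.sub_apply, LinearMap.comp_apply, e2]

end AuxPerturbation

/-- If the unitary groups generated by self-adjoint operators `P`, `P'` satisfy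
`‖e^{iPt} − e^{iP't}‖ ≤ C|t|` for all `t`, then `D(P) = D(P')` and `P − P'` extends to a
bounded operator of norm at most `C`. -/
theorem unbounded_perturbation_of_group_estimate
    {H : Type*} [NormedAddCommGroup H] [InnerProductSpace ℂ H] [CompleteSpace H]
    (P P' : H →ₗ.[ℂ] H) (hP : IsSelfAdjoint P) (hP' : IsSelfAdjoint P')
    (U U' : ℝ → (H →L[ℂ] H))
    (hU0 : U 0 = 1) (hU'0 : U' 0 = 1)
    (hUgrp : ∀ s t : ℝ, U (s + t) = U s * U t)
    (hU'grp : ∀ s t : ℝ, U' (s + t) = U' s * U' t)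
    (hUunit : ∀ t, U t ∈ unitary (H →L[ℂ] H))
    (hU'unit : ∀ t, U' t ∈ unitary (H →L[ℂ] H))
    -- `P` is the Stone generator of `U`:
    (hgen : ∀ x : P.domain, HasDerivAt (fun t : ℝ => U t (x : H)) (Complex.I • P x) 0)
    (hgen_max : ∀ (ξ : H) (d : H), HasDerivAt (fun t : ℝ => U t ξ) d 0 → ξ ∈ P.domain)
    -- `P'` is the Stone generator of `U'`:
    (hgen' : ∀ x : P'.domain, HasDerivAt (fun t : ℝ => U' t (x : H)) (Complex.I • P' x) 0)
    (hgen'_max : ∀ (ξ : H) (d : H), HasDerivAt (fun t : ℝ => U' t ξ) d 0 → ξ ∈ P'.domain)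
    (C : ℝ) (hCpos : 0 < C)
    (hC : ∀ t : ℝ, ‖U t - U' t‖ ≤ C * |t|) :
    P.domain = P'.domain ∧
      ∃ T : H →L[ℂ] H, ‖T‖ ≤ C ∧
        ∀ (x : H) (hx : x ∈ P.domain) (hx' : x ∈ P'.domain),
          T x = P ⟨x, hx⟩ - P' ⟨x, hx'⟩ := by
  exact aux_perturbation' P P' hP hP' U U' hU0 hU'0 hUgrp hU'grp hUunit hU'unit
    hgen hgen_max hgen' hgen'_max C hCpos hC
end

section
/- Let θ be a real skew-symmetric d×d matrix and let u : ℝᵈ → U(H) be defined from one-parameter unitary groups u₁,…,u_d satisfying u_j(s)u_k(t) = e^{istθ_{jk}} u_k(t)u_j(s), via u(s) = exp(−(i/2)∑_{j<k} θ_{jk} s_j s_k) · u₁(s₁)⋯u_d(s_d). Then u satisfies u(s)u(t) = e^{(i/2)θ(s,t)} u(s+t) for all s, t ∈ ℝᵈ, where θ(s,t) = ∑_{j,k} θ_{jk} s_j t_k. -/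
open Complex Finset

section aux

variable {A : Type*} [Ring A] [Algebra ℂ A]

lemma move_lemma : ∀ (n : ℕ) (a : A) (v : Fin n → A) (c : Fin n → ℂ),
    (∀ k, a * v k = c k • (v k * a)) →
    a * (List.ofFn v).prod = (∏ k, c k) • ((List.ofFn v).prod * a) := by
  intro n
  induction n with
  | zero => intro a v c h; simp
  | succ n ih =>
    intro a v c h
    rw [List.ofFn_succ, List.prod_cons, Fin.prod_univ_succ]
    rw [← mul_assoc, h 0, smul_mul_assoc, mul_assoc,
      ih a (fun i => v i.succ) (fun i => c i.succ) (fun k => h k.succ),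
      mul_smul_comm, smul_smul, mul_assoc]

lemma prod_weyl : ∀ (d : ℕ) (θ : Fin d → Fin d → ℝ) (u : Fin d → ℝ → A),
    (∀ j (s t : ℝ), u j (s + t) = u j s * u j t) →
    (∀ j k (s t : ℝ), u j s * u k t
        = Complex.exp (Complex.I * s * t * θ j k) • (u k t * u j s)) →
    ∀ s t : Fin d → ℝ,
      (List.ofFn fun j => u j (s j)).prod * (List.ofFn fun j => u j (t j)).prod
        = Complex.exp (Complex.I *
              ((∑ j, ∑ k, if k < j then θ j k * s j * t k else 0 : ℝ) : ℂ)) •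
            (List.ofFn fun j => u j (s j + t j)).prod := by
  intro d
  induction d with
  | zero => intro θ u hgrp hweyl s t; simp
  | succ d ih =>
    intro θ u hgrp hweyl s t
    have hofn : ∀ x : Fin (d+1) → ℝ,
        (List.ofFn fun j => u j (x j)).prod
          = (List.ofFn fun i : Fin d => u i.castSucc (x i.castSucc)).prod
              * u (Fin.last d) (x (Fin.last d)) := by
      intro x
      rw [List.ofFn_succ']
      simp [List.concat_eq_append]
    rw [hofn s, hofn t, hofn (fun j => s j + t j)]
    set Qs := (List.ofFn fun i : Fin d => u i.castSucc (s i.castSucc)).prod with hQs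
    set Qt := (List.ofFn fun i : Fin d => u i.castSucc (t i.castSucc)).prod with hQt
    have hmove := move_lemma d (u (Fin.last d) (s (Fin.last d)))
      (fun i : Fin d => u i.castSucc (t i.castSucc))
      (fun i : Fin d => Complex.exp (Complex.I * (s (Fin.last d)) * (t i.castSucc)
        * θ (Fin.last d) i.castSucc))
      (fun k => hweyl (Fin.last d) k.castSucc (s (Fin.last d)) (t k.castSucc))
    have hih := ih (fun j k : Fin d => θ j.castSucc k.castSucc)
      (fun i : Fin d => u i.castSucc)
      (fun j s t => hgrp j.castSucc s t)
      (fun j k s t => hweyl j.castSucc k.castSucc s t)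
      (fun i : Fin d => s i.castSucc) (fun i : Fin d => t i.castSucc)
    calc Qs * u (Fin.last d) (s (Fin.last d)) * (Qt * u (Fin.last d) (t (Fin.last d)))
        = Qs * (u (Fin.last d) (s (Fin.last d)) * Qt) * u (Fin.last d) (t (Fin.last d)) := by
          noncomm_ring
      _ = Qs * ((∏ i : Fin d, Complex.exp (Complex.I * (s (Fin.last d)) * (t i.castSucc)
              * θ (Fin.last d) i.castSucc)) • (Qt * u (Fin.last d) (s (Fin.last d))))
            * u (Fin.last d) (t (Fin.last d)) := by rw [hmove]
      _ = (∏ i : Fin d, Complex.exp (Complex.I * (s (Fin.last d)) * (t i.castSucc)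
              * θ (Fin.last d) i.castSucc)) •
            ((Qs * Qt) * (u (Fin.last d) (s (Fin.last d)) * u (Fin.last d) (t (Fin.last d)))) := by
          rw [mul_smul_comm, smul_mul_assoc]
          congr 1
          noncomm_ring
      _ = (∏ i : Fin d, Complex.exp (Complex.I * (s (Fin.last d)) * (t i.castSucc)
              * θ (Fin.last d) i.castSucc)) •
            ((Complex.exp (Complex.I *
              ((∑ j : Fin d, ∑ k : Fin d, if k < j then
                θ j.castSucc k.castSucc * s j.castSucc * t k.castSucc else 0 : ℝ) : ℂ)) •
              (List.ofFn fun i : Fin d => u i.castSucc (s i.castSucc + t i.castSucc)).prod)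
              * u (Fin.last d) (s (Fin.last d) + t (Fin.last d))) := by
          rw [hih, hgrp]
      _ = Complex.exp (Complex.I *
            ((∑ j, ∑ k, if k < j then θ j k * s j * t k else 0 : ℝ) : ℂ)) •
          ((List.ofFn fun i : Fin d => u i.castSucc (s i.castSucc + t i.castSucc)).prod
            * u (Fin.last d) (s (Fin.last d) + t (Fin.last d))) := by
          rw [smul_mul_assoc, smul_smul, ← Complex.exp_sum, ← Complex.exp_add]
          congr 2
          have hsum : (∑ j : Fin (d+1), ∑ k : Fin (d+1),
              if k < j then θ j k * s j * t k else 0 : ℝ)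
            = (∑ k : Fin d, s (Fin.last d) * t k.castSucc * θ (Fin.last d) k.castSucc)
              + ∑ j : Fin d, ∑ k : Fin d, if k < j then
                  θ j.castSucc k.castSucc * s j.castSucc * t k.castSucc else 0 := by
            rw [Fin.sum_univ_castSucc]
            rw [add_comm]
            congr 1
            · rw [Fin.sum_univ_castSucc]
              simp only [Fin.castSucc_lt_last, if_true, lt_irrefl, if_false, add_zero]
              apply Finset.sum_congr rfl
              intro k _
              ring
            · apply Finset.sum_congr rfl
              intro j _
              rw [Fin.sum_univ_castSucc]
              simp [Fin.castSucc_lt_castSucc_iff, (Fin.castSucc_lt_last j).not_gt]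
          rw [hsum]
          push_cast
          rw [mul_add, Finset.mul_sum, Finset.mul_sum]
          congr 1
          apply Finset.sum_congr rfl
          intro k _
          ring

end aux

lemma sum_decomp (d : ℕ) (θ : Fin d → Fin d → ℝ) (hskew : ∀ j k, θ k j = -θ j k)
    (s t : Fin d → ℝ) :
    (∑ j, ∑ k, θ j k * s j * t k)
      = (∑ j, ∑ k, if j < k then θ j k * s j * t k else 0)
        + (∑ j, ∑ k, if k < j then θ j k * s j * t k else 0) := by
  rw [← Finset.sum_add_distrib]
  apply Finset.sum_congr rfl
  intro j _
  rw [← Finset.sum_add_distrib]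
  apply Finset.sum_congr rfl
  intro k _
  rcases lt_trichotomy j k with h | h | h
  · simp [h, h.not_gt]
  · subst h
    have h0 : θ j j = 0 := by have := hskew j j; linarith
    simp [h0]
  · simp [h, h.not_gt]

lemma sum_swap_skew (d : ℕ) (θ : Fin d → Fin d → ℝ) (hskew : ∀ j k, θ k j = -θ j k)
    (s t : Fin d → ℝ) :
    (∑ j, ∑ k, if j < k then θ j k * t j * s k else 0)
      = - ∑ j, ∑ k, if k < j then θ j k * s j * t k else 0 := by
  rw [Finset.sum_comm, neg_eq_iff_eq_neg.symm, ← Finset.sum_neg_distrib]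
  apply Finset.sum_congr rfl
  intro k _
  rw [← Finset.sum_neg_distrib]
  apply Finset.sum_congr rfl
  intro j _
  split_ifs with h
  · rw [hskew j k]; ring
  · simp

lemma real_id (d : ℕ) (θ : Fin d → Fin d → ℝ) (hskew : ∀ j k, θ k j = -θ j k)
    (s t : Fin d → ℝ) :
    (∑ j, ∑ k, θ j k * s j * t k)
      + (∑ j, ∑ k, if j < k then θ j k * s j * s k else 0)
      + (∑ j, ∑ k, if j < k then θ j k * t j * t k else 0)
      - (∑ j, ∑ k, if j < k then θ j k * (s j + t j) * (s k + t k) else 0)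
    = 2 * ∑ j, ∑ k, if k < j then θ j k * s j * t k else 0 := by
  have hexp : (∑ j, ∑ k, if j < k then θ j k * (s j + t j) * (s k + t k) else 0)
      = (∑ j, ∑ k, if j < k then θ j k * s j * s k else 0)
        + (∑ j, ∑ k, if j < k then θ j k * t j * t k else 0)
        + (∑ j, ∑ k, if j < k then θ j k * s j * t k else 0)
        + (∑ j, ∑ k, if j < k then θ j k * t j * s k else 0) := by
    rw [← Finset.sum_add_distrib, ← Finset.sum_add_distrib, ← Finset.sum_add_distrib]
    apply Finset.sum_congr rfl
    intro j _
    rw [← Finset.sum_add_distrib, ← Finset.sum_add_distrib, ← Finset.sum_add_distrib]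
    apply Finset.sum_congr rfl
    intro k _
    split_ifs with h <;> ring
  have h1 := sum_decomp d θ hskew s t
  have h2 := sum_swap_skew d θ hskew s t
  linarith

/-- Given one-parameter unitary groups `u₁,…,u_d` satisfying the Weyl relations
`u_j(s)u_k(t) = e^{istθ_{jk}} u_k(t)u_j(s)` for a real skew-symmetric matrix `θ`, the map
`u(s) = exp(−(i/2)∑_{j<k} θ_{jk}s_j s_k) u₁(s₁)⋯u_d(s_d)` satisfies
`u(s)u(t) = e^{(i/2)θ(s,t)} u(s+t)`, where `θ(s,t) = ∑_{j,k} θ_{jk} s_j t_k`. -/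
theorem projective_rep_of_weyl_system
    {H : Type*} [NormedAddCommGroup H] [InnerProductSpace ℂ H] [CompleteSpace H]
    (d : ℕ) (θ : Fin d → Fin d → ℝ) (hskew : ∀ j k, θ k j = -θ j k)
    (u : Fin d → ℝ → (H →L[ℂ] H))
    (hu0 : ∀ j, u j 0 = 1)
    (hugrp : ∀ j (s t : ℝ), u j (s + t) = u j s * u j t)
    (huunit : ∀ j s, u j s ∈ unitary (H →L[ℂ] H))
    (hweyl : ∀ j k (s t : ℝ),
      u j s * u k t = Complex.exp (Complex.I * s * t * θ j k) • (u k t * u j s))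
    (U : (Fin d → ℝ) → (H →L[ℂ] H))
    (hU : ∀ s : Fin d → ℝ,
      U s = Complex.exp (-(Complex.I / 2) *
          ((∑ j, ∑ k, if j < k then θ j k * s j * s k else 0 : ℝ) : ℂ)) •
        (List.ofFn fun j => u j (s j)).prod) :
    ∀ s t : Fin d → ℝ,
      U s * U t =
        Complex.exp ((Complex.I / 2) * ((∑ j, ∑ k, θ j k * s j * t k : ℝ) : ℂ)) • U (s + t) := by
  intro s t
  rw [hU s, hU t, hU (s + t)]
  have hprod := prod_weyl d θ u hugrp hweyl s t
  have hst : (List.ofFn fun j => u j ((s + t) j)).prod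
      = (List.ofFn fun j => u j (s j + t j)).prod := by simp [Pi.add_apply]
  rw [smul_mul_smul_comm, hprod, hst, smul_smul, smul_smul, ← Complex.exp_add,
    ← Complex.exp_add, ← Complex.exp_add]
  congr 2
  have hkey := real_id d θ hskew s t
  have hA : ∀ x : Fin d → ℝ, ((∑ j, ∑ k, if j < k then θ j k * (s + t) j * (s + t) k else 0 : ℝ))
      = ∑ j, ∑ k, if j < k then θ j k * (s j + t j) * (s k + t k) else 0 := by
    intro x; simp [Pi.add_apply]
  rw [hA s]
  have := congrArg (Complex.ofReal) hkey
  push_cast at this ⊢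
  linear_combination (-(Complex.I / 2)) * this
end
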